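/- Let Q be a full-support pmf on a finite alphabet A, f : A → ℝ, τ > 0, and P* the tilted pmf with E_f(P*) = I. Viewing the minimum divergence D(I) = D(P*(I) ‖ Q) as a function of the threshold I on the interval (f_min, E_f(Q)), D is differentiable with derivative dD/dI = −τ(I) < 0; in particular D(I) is strictly decreasing in I. -/

import Mathlib

open Finset Real Set Topology Filter

section aux
variable {A : Type*} [Fintype A] [Nonempty A] (Q f : A → ℝ)

noncomputable def tZ (t : ℝ) : ℝ := ∑ b, Q b * (2:ℝ) ^ (-(t * f b))
noncomputable def tS (t : ℝ) : ℝ := ∑ b, Q b * f b * (2:ℝ) ^ (-(t * f b))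
noncomputable def tT (t : ℝ) : ℝ := ∑ b, Q b * f b * f b * (2:ℝ) ^ (-(t * f b))
noncomputable def tm (t : ℝ) : ℝ := tS Q f t / tZ Q f t
noncomputable def tL (t : ℝ) : ℝ := Real.logb 2 (tZ Q f t)

variable {Q}

lemma tZ_pos (hQ0 : ∀ a, 0 < Q a) (t : ℝ) : 0 < tZ Q f t :=
  Finset.sum_pos (fun b _ => mul_pos (hQ0 b) (rpow_pos_of_pos two_pos _)) univ_nonempty

lemma hasDerivAt_rpow_lin (c t : ℝ) :
    HasDerivAt (fun t : ℝ => (2:ℝ) ^ (-(t * c))) ((2:ℝ) ^ (-(t * c)) * Real.log 2 * (-c)) t := by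
  have h1 : HasDerivAt (fun t : ℝ => -(t * c)) (-c) t := by
    simpa using ((hasDerivAt_id t).mul_const c).fun_neg
  exact ((hasStrictDerivAt_const_rpow two_pos (-(t * c))).hasDerivAt.comp t h1)

lemma hasDerivAt_tZ (t : ℝ) : HasDerivAt (tZ Q f) (-(Real.log 2) * tS Q f t) t := by
  have := HasDerivAt.fun_sum (fun b (_ : b ∈ (univ : Finset A)) =>
    ((hasDerivAt_rpow_lin (f b) t).const_mul (Q b)))
  refine this.congr_deriv ?_
  simp only [tS, Finset.mul_sum]
  apply Finset.sum_congr rfl; intro b _; ring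

lemma hasDerivAt_tS (t : ℝ) : HasDerivAt (tS Q f) (-(Real.log 2) * tT Q f t) t := by
  have := HasDerivAt.fun_sum (fun b (_ : b ∈ (univ : Finset A)) =>
    ((hasDerivAt_rpow_lin (f b) t).const_mul (Q b * f b)))
  refine this.congr_deriv ?_
  simp only [tT, Finset.mul_sum]
  apply Finset.sum_congr rfl; intro b _; ring

lemma hasDerivAt_tL (hQ0 : ∀ a, 0 < Q a) (t : ℝ) :
    HasDerivAt (tL Q f) (-(tm Q f t)) t := by
  have hZ := tZ_pos f hQ0 t
  have h := ((hasDerivAt_tZ f t).log hZ.ne').div_const (Real.log 2)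
  have : tL Q f = fun t => Real.log (tZ Q f t) / Real.log 2 := by
    ext u; simp [tL, Real.logb]
  rw [this]
  refine h.congr_deriv ?_
  have h2 : Real.log 2 ≠ 0 := by positivity
  unfold tm
  field_simp

lemma hasDerivAt_tm (hQ0 : ∀ a, 0 < Q a) (t : ℝ) :
    HasDerivAt (tm Q f)
      (-(Real.log 2) * (tT Q f t / tZ Q f t - (tm Q f t)^2)) t := by
  have hZ := tZ_pos f hQ0 t
  have h := (hasDerivAt_tS (Q := Q) f t).div (hasDerivAt_tZ (Q := Q) f t) hZ.ne'
  refine h.congr_deriv ?_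
  unfold tm
  field_simp
  ring

lemma var_pos (hQ0 : ∀ a, 0 < Q a) (hnc : ∃ a b, f a ≠ f b) (t : ℝ) :
    0 < tT Q f t / tZ Q f t - (tm Q f t)^2 := by
  have hZ := tZ_pos f hQ0 t
  set m := tm Q f t with hm
  have key : tT Q f t / tZ Q f t - m^2
      = ∑ a, (Q a * (2:ℝ) ^ (-(t * f a)) / tZ Q f t) * (f a - m)^2 := by
    have h1 : ∑ a, (Q a * (2:ℝ) ^ (-(t * f a)) / tZ Q f t) = 1 := by
      rw [← Finset.sum_div, ← tZ, div_self hZ.ne']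
    have h2 : ∑ a, (Q a * (2:ℝ) ^ (-(t * f a)) / tZ Q f t) * f a = m := by
      rw [hm, tm, tS, Finset.sum_div]
      apply Finset.sum_congr rfl; intro b _; ring
    have h3 : ∑ a, (Q a * (2:ℝ) ^ (-(t * f a)) / tZ Q f t) * (f a)^2
        = tT Q f t / tZ Q f t := by
      rw [tT, Finset.sum_div]
      apply Finset.sum_congr rfl; intro b _; ring
    have expand : ∀ a, (Q a * (2:ℝ) ^ (-(t * f a)) / tZ Q f t) * (f a - m)^2
        = (Q a * (2:ℝ) ^ (-(t * f a)) / tZ Q f t) * (f a)^2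
          - 2 * m * ((Q a * (2:ℝ) ^ (-(t * f a)) / tZ Q f t) * f a)
          + m^2 * (Q a * (2:ℝ) ^ (-(t * f a)) / tZ Q f t) := by
      intro a; ring
    simp only [expand, Finset.sum_add_distrib, Finset.sum_sub_distrib,
      ← Finset.mul_sum, h1, h2, h3]
    ring
  rw [key]
  obtain ⟨a, b, hab⟩ := hnc
  have hne : f a ≠ m ∨ f b ≠ m := by
    by_contra h; push_neg at h; exact hab (h.1.trans h.2.symm)
  have hpos : ∀ c, 0 < Q c * (2:ℝ) ^ (-(t * f c)) / tZ Q f t :=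
    fun c => div_pos (mul_pos (hQ0 c) (rpow_pos_of_pos two_pos _)) hZ
  have hterm : ∀ c, 0 ≤ (Q c * (2:ℝ) ^ (-(t * f c)) / tZ Q f t) * (f c - m)^2 :=
    fun c => mul_nonneg (hpos c).le (sq_nonneg _)
  obtain ⟨c, hc⟩ : ∃ c, f c ≠ m := hne.elim (fun h => ⟨a, h⟩) (fun h => ⟨b, h⟩)
  exact Finset.sum_pos' (fun d _ => hterm d)
    ⟨c, Finset.mem_univ c, mul_pos (hpos c) (by have := sub_ne_zero.mpr hc; positivity)⟩

lemma tm_strictAnti (hQ0 : ∀ a, 0 < Q a) (hnc : ∃ a b, f a ≠ f b) :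
    StrictAnti (tm Q f) := by
  apply strictAnti_of_hasDerivAt_neg (hasDerivAt_tm f hQ0)
  intro t
  have h1 := var_pos f hQ0 hnc t
  have h2 : (0:ℝ) < Real.log 2 := Real.log_pos one_lt_two
  nlinarith

/-- convexity gradient inequality for tL -/
lemma tL_grad (hQ0 : ∀ a, 0 < Q a) (hnc : ∃ a b, f a ≠ f b) (s t : ℝ) :
    tL Q f s - tm Q f s * (t - s) ≤ tL Q f t := by
  have hm := tm_strictAnti f hQ0 hnc
  have hdiff : ∀ u, HasDerivAt (tL Q f) (-(tm Q f u)) u := hasDerivAt_tL f hQ0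
  rcases lt_trichotomy s t with h | h | h
  · obtain ⟨c, hc, hc2⟩ := exists_hasDerivAt_eq_slope (tL Q f) (fun u => -(tm Q f u)) h
      (fun u _ => (hdiff u).continuousAt.continuousWithinAt) (fun u _ => hdiff u)
    have : tm Q f c < tm Q f s := hm hc.1
    have hts : 0 < t - s := by linarith
    rw [eq_div_iff (by linarith : t - s ≠ 0)] at hc2
    nlinarith
  · simp [h]
  · obtain ⟨c, hc, hc2⟩ := exists_hasDerivAt_eq_slope (tL Q f) (fun u => -(tm Q f u)) h
      (fun u _ => (hdiff u).continuousAt.continuousWithinAt) (fun u _ => hdiff u)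
    have : tm Q f s < tm Q f c := hm hc.2
    rw [eq_div_iff (by linarith : s - t ≠ 0)] at hc2
    nlinarith

end aux

theorem minimum_divergence_derivative
    {A : Type*} [Fintype A] [Nonempty A]
    (Q : A → ℝ) (hQ0 : ∀ a, 0 < Q a) (hQ1 : ∑ a, Q a = 1)
    (f : A → ℝ) (hnonconst : ∃ a b, f a ≠ f b)
    (fmin : ℝ) (hfmin : fmin = Finset.univ.inf' Finset.univ_nonempty f)
    (τ : ℝ → ℝ)
    (hτpos : ∀ I ∈ Set.Ioo fmin (∑ a, Q a * f a), 0 < τ I)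
    (Pstar : ℝ → A → ℝ)
    (hPstar : ∀ I a, Pstar I a = Q a * (2 : ℝ) ^ (-(τ I * f a)) /
        ∑ b, Q b * (2 : ℝ) ^ (-(τ I * f b)))
    (hPstarI : ∀ I ∈ Set.Ioo fmin (∑ a, Q a * f a), ∑ a, Pstar I a * f a = I)
    (D : ℝ → ℝ)
    (hD : ∀ I, D I = ∑ a, Pstar I a * Real.logb 2 (Pstar I a / Q a)) :
    (∀ I ∈ Set.Ioo fmin (∑ a, Q a * f a), HasDerivAt D (-(τ I)) I) ∧
    StrictAntiOn D (Set.Ioo fmin (∑ a, Q a * f a)) := by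
  set EQ := ∑ a, Q a * f a with hEQ
  have hZpos : ∀ t, 0 < tZ Q f t := tZ_pos f hQ0
  have hPstar' : ∀ K a, Pstar K a = Q a * (2:ℝ) ^ (-(τ K * f a)) / tZ Q f (τ K) :=
    fun K a => hPstar K a
  have hmanti : StrictAnti (tm Q f) := tm_strictAnti f hQ0 hnonconst
  -- mean of tilted distribution equals K
  have hcomp : ∀ K, ∑ a, Pstar K a * f a = tm Q f (τ K) := by
    intro K
    rw [tm, tS, Finset.sum_div]
    apply Finset.sum_congr rfl; intro b _
    rw [hPstar']; ring
  have hmτ : ∀ K ∈ Set.Ioo fmin EQ, tm Q f (τ K) = K :=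
    fun K hK => (hcomp K).symm.trans (hPstarI K hK)
  -- sum of Pstar is 1
  have hsum1 : ∀ K, ∑ a, Pstar K a = 1 := by
    intro K
    have : ∑ a, Pstar K a = tZ Q f (τ K) / tZ Q f (τ K) := by
      rw [tZ, Finset.sum_div]
      apply Finset.sum_congr rfl; intro b _; rw [hPstar', tZ]
    rw [this, div_self (hZpos (τ K)).ne']
  -- formula for D
  have hDform : ∀ K ∈ Set.Ioo fmin EQ, D K = -(τ K) * K - tL Q f (τ K) := by
    intro K hK
    rw [hD]
    have hterm : ∀ a, Pstar K a * Real.logb 2 (Pstar K a / Q a)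
        = Pstar K a * (-(τ K * f a)) - Pstar K a * tL Q f (τ K) := by
      intro a
      have h1 : Pstar K a / Q a = (2:ℝ) ^ (-(τ K * f a)) / tZ Q f (τ K) := by
        have hQa : Q a ≠ 0 := (hQ0 a).ne'
        rw [hPstar', div_div, mul_comm (tZ Q f (τ K)) (Q a), ← div_div,
          mul_div_cancel_left₀ _ hQa]
      rw [h1, Real.logb_div (by positivity) (hZpos (τ K)).ne',
        Real.logb_rpow two_pos (by norm_num), tL]
      ring
    rw [Finset.sum_congr rfl (fun a _ => hterm a), Finset.sum_sub_distrib]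
    have e1 : ∑ a, Pstar K a * (-(τ K * f a)) = -(τ K) * K := by
      calc ∑ a, Pstar K a * (-(τ K * f a)) = -(τ K) * ∑ a, Pstar K a * f a := by
            rw [Finset.mul_sum]
            apply Finset.sum_congr rfl; intro b _; ring
        _ = -(τ K) * K := by rw [hPstarI K hK]
    have e2 : ∑ a, Pstar K a * tL Q f (τ K) = tL Q f (τ K) := by
      rw [← Finset.sum_mul, hsum1, one_mul]
    rw [e1, e2]
  -- gradient inequality
  have hgrad : ∀ J ∈ Set.Ioo fmin EQ, ∀ K ∈ Set.Ioo fmin EQ,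
      D J - τ J * (K - J) ≤ D K := by
    intro J hJ K hK
    have h1 := tL_grad f hQ0 hnonconst (τ K) (τ J)
    rw [hmτ K hK] at h1
    rw [hDform J hJ, hDform K hK]
    nlinarith
  -- continuity of τ at points of the interval
  have hτcont : ∀ I ∈ Set.Ioo fmin EQ, ∀ ε > 0, ∃ δ > 0,
      ∀ J ∈ Set.Ioo fmin EQ, |J - I| < δ → |τ J - τ I| < ε := by
    intro I hI ε hε
    have hmI := hmτ I hI
    have hδ1 : 0 < tm Q f (τ I - ε) - I := by
      have := hmanti (show τ I - ε < τ I by linarith)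
      linarith
    have hδ2 : 0 < I - tm Q f (τ I + ε) := by
      have := hmanti (show τ I < τ I + ε by linarith)
      linarith
    refine ⟨min (tm Q f (τ I - ε) - I) (I - tm Q f (τ I + ε)), lt_min hδ1 hδ2, ?_⟩
    intro J hJ habs
    have hmJ := hmτ J hJ
    rw [abs_lt] at habs ⊢
    obtain ⟨hl, hr⟩ := habs
    have hr' : J < tm Q f (τ I - ε) := by
      have := min_le_left (tm Q f (τ I - ε) - I) (I - tm Q f (τ I + ε)); linarith
    have hl' : tm Q f (τ I + ε) < J := by
      have := min_le_right (tm Q f (τ I - ε) - I) (I - tm Q f (τ I + ε)); linarith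
    constructor
    · have : τ I - ε < τ J := hmanti.lt_iff_gt.mp (by rw [hmJ]; exact hr')
      linarith
    · have : τ J < τ I + ε := hmanti.lt_iff_gt.mp (by rw [hmJ]; exact hl')
      linarith
  have hderiv : ∀ I ∈ Set.Ioo fmin EQ, HasDerivAt D (-(τ I)) I := by
    intro I hI
    rw [hasDerivAt_iff_tendsto_slope, Metric.tendsto_nhds]
    intro ε hε
    obtain ⟨δ, hδpos, hδ⟩ := hτcont I hI ε hε
    have h1 : Set.Ioo fmin EQ ∈ 𝓝[≠] I :=
      nhdsWithin_le_nhds (isOpen_Ioo.mem_nhds hI)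
    have h2 : Metric.ball I δ ∈ 𝓝[≠] I :=
      nhdsWithin_le_nhds (Metric.ball_mem_nhds I hδpos)
    filter_upwards [h1, h2, self_mem_nhdsWithin] with J hJIoo hJball hJne
    have hne : J - I ≠ 0 := sub_ne_zero.mpr hJne
    have habsJI : 0 < |J - I| := abs_pos.mpr hne
    have hτJ : |τ J - τ I| < ε := by
      apply hδ J hJIoo
      simpa [Real.dist_eq] using hJball
    set num := D J - D I + τ I * (J - I) with hnum
    have hA : 0 ≤ num := by
      have := hgrad I hI J hJIoo; simp only [hnum]; nlinarith
    have hB : num ≤ (τ I - τ J) * (J - I) := by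
      have := hgrad J hJIoo I hI; simp only [hnum]; nlinarith
    have hslope : slope D I J - (-(τ I)) = num / (J - I) := by
      rw [slope_def_field, hnum]
      field_simp
      ring
    rw [Real.dist_eq, hslope, abs_div]
    rw [div_lt_iff₀ habsJI]
    have hnumabs : |num| ≤ |τ J - τ I| * |J - I| := by
      rw [abs_of_nonneg hA]
      calc num ≤ (τ I - τ J) * (J - I) := hB
        _ ≤ |(τ I - τ J) * (J - I)| := le_abs_self _
        _ = |τ J - τ I| * |J - I| := by rw [abs_mul, abs_sub_comm]
    calc |num| ≤ |τ J - τ I| * |J - I| := hnumabs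
      _ < ε * |J - I| := by
          apply mul_lt_mul_of_pos_right hτJ habsJI
  refine ⟨hderiv, ?_⟩
  intro J hJ K hK hlt
  have := hgrad K hK J hJ
  have hτK := hτpos K hK
  nlinarith
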